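/- There is no L-formula φ(x,y,z) with three free variables such that for all lines a, b, c in the Euclidean plane: the lines a, b, c pass through a common point if and only if F²_ℝ ⊨ φ[a,b,c]. (The ternary co-punctuality relation ρ is not definable from O and = in the structure of lines of the Euclidean plane.) -/

import Mathlib

open FirstOrder Language Structure BoundedFormula

/-- The relation symbols of the language `L`: a single binary relation `O`. -/
inductive PerpRel : ℕ → Type
  | o : PerpRel 2

/-- The first-order language with a single binary relation symbol `O`. -/
def L : Language := ⟨fun _ => Empty, PerpRel⟩
  deriving IsRelational

/-- The binary relation symbol `O` of `L`. -/
abbrev oSym : L.Relations 2 := .o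

/-- `O(xᵢ, xⱼ)` as a bounded formula. -/
def oBF {n : ℕ} (i j : Fin n) : L.BoundedFormula Empty n :=
  oSym.boundedFormula₂ (&i) (&j)

/-- Finite conjunction of a list of bounded formulas. -/
def andAll {n : ℕ} : List (L.BoundedFormula Empty n) → L.BoundedFormula Empty n
  | [] => ⊤
  | φ :: l => φ ⊓ andAll l

/-- λ₁ₙ : ∀y₁…∀yₙ∀s(O(s,y₁) ∧ … ∧ O(s,yₙ) → ∃t(t ≠ y₁ ∧ … ∧ t ≠ yₙ ∧ O(s,t))).
Variables: y₁,…,yₙ are de Bruijn indices 0,…,n-1, s is index n, t is index n+1. -/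
def lam1 (n : ℕ) : L.Sentence :=
  ((andAll ((List.finRange n).map fun i => oBF (Fin.last n) i.castSucc)).imp
    ((andAll ((List.finRange n).map fun i =>
        ∼((&(Fin.last (n + 1))) =' (&(i.castSucc.castSucc)))) ⊓
      oBF ((Fin.last n).castSucc) (Fin.last (n + 1))).ex)).alls

/-- λ₂ₙ : ∀y₁…∀yₙ∃s(¬O(s,y₁) ∧ … ∧ ¬O(s,yₙ)).
Variables: y₁,…,yₙ are de Bruijn indices 0,…,n-1, s is index n. -/
def lam2 (n : ℕ) : L.Sentence :=
  ((andAll ((List.finRange n).map fun i => ∼(oBF (Fin.last n) i.castSucc))).ex).alls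

/-- λ₃ : ∀x ¬O(x,x). -/
def lam3 : L.Sentence := (∼(oBF (0 : Fin 1) 0)).alls

/-- λ₄ : ∀x∀y(O(x,y) → O(y,x)). -/
def lam4 : L.Sentence := ((oBF (0 : Fin 2) 1).imp (oBF (1 : Fin 2) 0)).alls

/-- λ₅ : ∀x∃y O(x,y). -/
def lam5 : L.Sentence := ((oBF (0 : Fin 2) 1).ex).alls

/-- λ₆ : ∀x∀y∀z∀t(O(x,z) ∧ O(y,z) ∧ O(x,t) → O(y,t)). -/
def lam6 : L.Sentence :=
  ((oBF (0 : Fin 4) 2 ⊓ oBF (1 : Fin 4) 2 ⊓ oBF (0 : Fin 4) 3).imp (oBF (1 : Fin 4) 3)).alls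

/-- The theory SAPP. -/
def SAPP : L.Theory :=
  {φ | ∃ n, 1 ≤ n ∧ φ = lam1 n} ∪ {φ | ∃ n, 2 ≤ n ∧ φ = lam2 n} ∪ {lam3, lam4, lam5, lam6}

/-- The Euclidean plane ℝ². -/
abbrev Plane := EuclideanSpace ℝ (Fin 2)

/-- A line in the Euclidean plane: a one-dimensional affine subspace of ℝ². -/
structure Line where
  carrier : AffineSubspace ℝ Plane
  one_dim : Module.finrank ℝ carrier.direction = 1

/-- Two lines are perpendicular iff their direction subspaces are orthogonal. -/
def Line.Perp (a b : Line) : Prop :=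
  a.carrier.direction ⟂ b.carrier.direction

/-- The structure F²_ℝ of all lines in the Euclidean plane, with `O` interpreted
as perpendicularity. -/
instance : L.Structure Line where
  RelMap | .o => fun x => Line.Perp (x 0) (x 1)

/- ========= auxiliary material for statement_8 ========= -/

theorem Line.ext' {a b : Line} (h : a.carrier = b.carrier) : a = b := by
  cases a; cases b; simpa using h

/-- Translation of a line by a vector `w`. -/
noncomputable def tr (w : Plane) (ℓ : Line) : Line :=
  ⟨ℓ.carrier.map (AffineEquiv.constVAdd ℝ Plane w).toAffineMap, by
    rw [AffineSubspace.map_direction]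
    have h : ((AffineEquiv.constVAdd ℝ Plane w).toAffineMap).linear = LinearMap.id := rfl
    rw [h, Submodule.map_id]
    exact ℓ.one_dim⟩

theorem tr_dir (w : Plane) (ℓ : Line) :
    (tr w ℓ).carrier.direction = ℓ.carrier.direction := by
  rw [tr, AffineSubspace.map_direction]
  have h : ((AffineEquiv.constVAdd ℝ Plane w).toAffineMap).linear = LinearMap.id := rfl
  rw [h, Submodule.map_id]

theorem mem_tr (w : Plane) (ℓ : Line) (x : Plane) :
    x ∈ (tr w ℓ).carrier ↔ x - w ∈ ℓ.carrier := by
  simp only [tr, AffineSubspace.mem_map]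
  constructor
  · rintro ⟨y, hy, rfl⟩
    simpa [AffineEquiv.constVAdd_apply, vadd_eq_add] using hy
  · intro h
    exact ⟨x - w, h, by simp [AffineEquiv.constVAdd_apply, vadd_eq_add]⟩

theorem tr_tr (w : Plane) (ℓ : Line) : tr (-w) (tr w ℓ) = ℓ := by
  apply Line.ext'
  ext x
  rw [mem_tr, mem_tr]
  simp

noncomputable def e0 : Plane := EuclideanSpace.single 0 1
noncomputable def e1 : Plane := EuclideanSpace.single 1 1
noncomputable def dg : Plane := e0 + e1

theorem e0_apply : (e0 0 = 1) ∧ (e0 1 = 0) := by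
  constructor <;> simp [e0, EuclideanSpace.single_apply]
theorem e1_apply : (e1 0 = 0) ∧ (e1 1 = 1) := by
  constructor <;> simp [e1, EuclideanSpace.single_apply]
theorem dg_apply : (dg 0 = 1) ∧ (dg 1 = 1) := by
  constructor <;> simp [dg, e0_apply.1, e0_apply.2, e1_apply.1, e1_apply.2]

theorem e0_ne : e0 ≠ 0 := fun h => by
  have : e0 0 = (0 : Plane) 0 := by rw [h]
  rw [e0_apply.1] at this; simp at this
theorem e1_ne : e1 ≠ 0 := fun h => by
  have : e1 1 = (0 : Plane) 1 := by rw [h]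
  rw [e1_apply.2] at this; simp at this
theorem dg_ne : dg ≠ 0 := fun h => by
  have : dg 0 = (0 : Plane) 0 := by rw [h]
  rw [dg_apply.1] at this; simp at this

/-- The subspace of diagonal directions. -/
noncomputable def D : Submodule ℝ Plane := Submodule.span ℝ {dg}

/-- Line through `p` with direction spanned by `v`. -/
noncomputable def lineOf (p v : Plane) (hv : v ≠ 0) : Line :=
  ⟨AffineSubspace.mk' p (Submodule.span ℝ {v}), by
    rw [AffineSubspace.direction_mk']
    exact finrank_span_singleton hv⟩

theorem lineOf_dir (p v : Plane) (hv : v ≠ 0) :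
    (lineOf p v hv).carrier.direction = Submodule.span ℝ {v} := by
  rw [lineOf, AffineSubspace.direction_mk']

theorem mem_lineOf (p v : Plane) (hv : v ≠ 0) (x : Plane) :
    x ∈ (lineOf p v hv).carrier ↔ ∃ t : ℝ, t • v = x - p := by
  rw [lineOf]
  simp only [AffineSubspace.mem_mk', Submodule.mem_span_singleton]
  simp [vsub_eq_sub]

open Classical in
/-- The map on lines: translate diagonal lines by `e0`, fix everything else. -/
noncomputable def Tmap (w : Plane) (ℓ : Line) : Line :=
  if ℓ.carrier.direction = D then tr w ℓ else ℓ

theorem Tmap_dir (w : Plane) (ℓ : Line) :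
    (Tmap w ℓ).carrier.direction = ℓ.carrier.direction := by
  by_cases h : ℓ.carrier.direction = D <;> simp [Tmap, h, tr_dir]

theorem Tmap_Tmap (w : Plane) (ℓ : Line) : Tmap (-w) (Tmap w ℓ) = ℓ := by
  by_cases h : ℓ.carrier.direction = D
  · simp [Tmap, h, tr_dir, tr_tr]
  · simp [Tmap, h]

/-- The automorphism of `Line` as an `L`-structure. -/
noncomputable def g : Line ≃[L] Line where
  toFun := Tmap e0
  invFun := Tmap (-e0)
  left_inv ℓ := Tmap_Tmap e0 ℓ
  right_inv ℓ := by have := Tmap_Tmap (-e0) ℓ; rwa [neg_neg] at this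
  map_fun' := fun {n} f => isEmptyElim f
  map_rel' := by
    rintro n ⟨⟩ x
    show Line.Perp (Tmap e0 (x 0)) (Tmap e0 (x 1)) ↔ Line.Perp (x 0) (x 1)
    rw [Line.Perp, Line.Perp, Tmap_dir, Tmap_dir]

noncomputable def lineA : Line := lineOf 0 e0 e0_ne
noncomputable def lineB : Line := lineOf 0 e1 e1_ne
noncomputable def lineC : Line := lineOf 0 dg dg_ne

theorem dirA_ne : lineA.carrier.direction ≠ D := by
  rw [lineA, lineOf_dir]
  intro h
  have hd : dg ∈ Submodule.span ℝ {e0} := h ▸ Submodule.mem_span_singleton_self dg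
  obtain ⟨t, ht⟩ := Submodule.mem_span_singleton.1 hd
  have : (t • e0) 1 = dg 1 := by rw [ht]
  rw [PiLp.smul_apply, e0_apply.2, dg_apply.2] at this
  simp at this

theorem dirB_ne : lineB.carrier.direction ≠ D := by
  rw [lineB, lineOf_dir]
  intro h
  have hd : dg ∈ Submodule.span ℝ {e1} := h ▸ Submodule.mem_span_singleton_self dg
  obtain ⟨t, ht⟩ := Submodule.mem_span_singleton.1 hd
  have : (t • e1) 0 = dg 0 := by rw [ht]
  rw [PiLp.smul_apply, e1_apply.1, dg_apply.1] at this
  simp at this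

theorem dirC_eq : lineC.carrier.direction = D := by
  rw [lineC, lineOf_dir]; rfl

theorem gA : g lineA = lineA := by show Tmap e0 lineA = lineA; simp [Tmap, dirA_ne]
theorem gB : g lineB = lineB := by show Tmap e0 lineB = lineB; simp [Tmap, dirB_ne]
theorem gC : g lineC = tr e0 lineC := by show Tmap e0 lineC = tr e0 lineC; simp [Tmap, dirC_eq]

theorem zero_mem_A : (0 : Plane) ∈ lineA.carrier := by
  rw [lineA, mem_lineOf]; exact ⟨0, by simp⟩
theorem zero_mem_B : (0 : Plane) ∈ lineB.carrier := by
  rw [lineB, mem_lineOf]; exact ⟨0, by simp⟩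
theorem zero_mem_C : (0 : Plane) ∈ lineC.carrier := by
  rw [lineC, mem_lineOf]; exact ⟨0, by simp⟩

theorem not_copunctual :
    ¬ ∃ p : Plane, p ∈ (g lineA).carrier ∧ p ∈ (g lineB).carrier ∧ p ∈ (g lineC).carrier := by
  rintro ⟨p, ha, hb, hc⟩
  rw [gA, lineA, mem_lineOf] at ha
  rw [gB, lineB, mem_lineOf] at hb
  rw [gC, mem_tr, lineC, mem_lineOf] at hc
  obtain ⟨s, hs⟩ := ha
  obtain ⟨u, hu⟩ := hb
  obtain ⟨t, ht⟩ := hc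
  have hp1 : p 1 = 0 := by
    have : (s • e0) 1 = (p - 0) 1 := by rw [hs]
    rw [PiLp.smul_apply, e0_apply.2] at this
    simpa using this.symm
  have hp0 : p 0 = 0 := by
    have : (u • e1) 0 = (p - 0) 0 := by rw [hu]
    rw [PiLp.smul_apply, e1_apply.1] at this
    simpa using this.symm
  have h0 : (t • dg) 0 = (p - e0 - 0 : Plane) 0 := by rw [ht]
  have h1 : (t • dg) 1 = (p - e0 - 0 : Plane) 1 := by rw [ht]
  rw [PiLp.smul_apply, dg_apply.1] at h0
  rw [PiLp.smul_apply, dg_apply.2] at h1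
  have he0 : (p - e0 - 0 : Plane) 0 = -1 := by
    simp [hp0, e0_apply.1]
  have he1 : (p - e0 - 0 : Plane) 1 = 0 := by
    simp [hp1, e0_apply.2]
  rw [he0] at h0
  rw [he1] at h1
  simp at h0 h1
  rw [h1] at h0
  norm_num at h0

/-- co-punctuality of three lines is not definable by any L-formula in the
structure of lines of the Euclidean plane. -/
theorem statement_8 :
    ¬ ∃ φ : L.Formula (Fin 3), ∀ a b c : Line,
      ((∃ p : Plane, p ∈ a.carrier ∧ p ∈ b.carrier ∧ p ∈ c.carrier) ↔
        φ.Realize ![a, b, c]) := by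
  rintro ⟨φ, h⟩
  have h1 : φ.Realize ![lineA, lineB, lineC] :=
    (h lineA lineB lineC).1 ⟨0, zero_mem_A, zero_mem_B, zero_mem_C⟩
  have hcomp : ![g lineA, g lineB, g lineC] = g ∘ ![lineA, lineB, lineC] := by
    funext i; fin_cases i <;> rfl
  have h2 : φ.Realize ![g lineA, g lineB, g lineC] := by
    rw [hcomp]
    exact (StrongHomClass.realize_formula g φ).2 h1
  exact not_copunctual ((h (g lineA) (g lineB) (g lineC)).2 h2)
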